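/- Let V ∈ ℚ[[z]] be a formal power series with constant coefficient 0 satisfying V·(V-2)² = z. Then for every n ≥ 1, the coefficient of zⁿ in V equals (1/n)·binomial(3n-2, n-1)·(1/2^{3n-1}). -/

import Mathlib

open PowerSeries

private lemma fact_add_three (n : ℕ) :
    ((n+3).factorial : ℚ) = ((n:ℚ)+3)*((n:ℚ)+2)*((n:ℚ)+1)*(n.factorial : ℚ) := by
  rw [show n+3 = (n+2)+1 by omega, Nat.factorial_succ, show n+2 = (n+1)+1 by omega,
    Nat.factorial_succ, Nat.factorial_succ]
  push_cast; ring

private lemma fact_add_two (n : ℕ) :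
    ((n+2).factorial : ℚ) = ((n:ℚ)+2)*((n:ℚ)+1)*(n.factorial : ℚ) := by
  rw [show n+2 = (n+1)+1 by omega, Nat.factorial_succ, Nat.factorial_succ]
  push_cast; ring

private lemma choose_id_q (m : ℕ) :
    (2*((m:ℚ)+1)*(2*(m:ℚ)+3)) * ((3*m+4).choose (m+1) : ℚ) =
      (3*(3*(m:ℚ)+2)*(3*(m:ℚ)+4)) * ((3*m+1).choose m : ℚ) := by
  have h1 : m+1 ≤ 3*m+4 := by omega
  have h2 : m ≤ 3*m+1 := by omega
  rw [Nat.cast_choose ℚ h1, Nat.cast_choose ℚ h2,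
    show (3*m+4) - (m+1) = 2*m+3 by omega, show (3*m+1) - m = 2*m+1 by omega]
  have e1 : ((3*m+4).factorial : ℚ)
      = (3*(m:ℚ)+4)*(3*(m:ℚ)+3)*(3*(m:ℚ)+2)*((3*m+1).factorial : ℚ) := by
    rw [show 3*m+4 = (3*m+1)+3 by omega, fact_add_three]; push_cast; ring
  have e2 : ((m+1).factorial : ℚ) = ((m:ℚ)+1) * (m.factorial : ℚ) := by
    rw [Nat.factorial_succ]; push_cast; ring
  have e3 : ((2*m+3).factorial : ℚ)
      = (2*(m:ℚ)+3)*(2*(m:ℚ)+2)*((2*m+1).factorial : ℚ) := by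
    rw [show 2*m+3 = (2*m+1)+2 by omega, fact_add_two]; push_cast; ring
  rw [e1, e2, e3]
  have f1 : ((3*m+1).factorial : ℚ) ≠ 0 := by
    exact_mod_cast (3*m+1).factorial_ne_zero
  have f2 : ((m).factorial : ℚ) ≠ 0 := by exact_mod_cast (m).factorial_ne_zero
  have f3 : ((2*m+1).factorial : ℚ) ≠ 0 := by
    exact_mod_cast (2*m+1).factorial_ne_zero
  have g1 : ((m:ℚ)+1) ≠ 0 := by positivity
  have g2 : (2*(m:ℚ)+3) ≠ 0 := by positivity
  have g3 : (2*(m:ℚ)+2) ≠ 0 := by positivity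
  field_simp

theorem lagrange_inversion_coefficients
    (V : PowerSeries ℚ)
    (h0 : PowerSeries.coeff 0 V = 0)
    (hV : V * (V - 2) ^ 2 = PowerSeries.X) :
    ∀ n, 1 ≤ n →
      PowerSeries.coeff n V =
        (1 / (n : ℚ)) * (Nat.choose (3 * n - 2) (n - 1) : ℚ) *
          (1 / 2 ^ (3 * n - 1)) := by
  set f1 : ℚ⟦X⟧ := d⁄dX ℚ V with hf1
  set f2 : ℚ⟦X⟧ := d⁄dX ℚ f1 with hf2
  have hC2 : d⁄dX ℚ (2 : ℚ⟦X⟧) = 0 := by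
    rw [← map_ofNat (C (R := ℚ)) 2]; exact derivative_C (r := 2)
  have hD1 : (3*V^2 - 8*V + 4) * f1 = 1 := by
    have key := congrArg (d⁄dX ℚ) hV
    rw [derivative_X, Derivation.leibniz, Derivation.leibniz_pow, map_sub, hC2] at key
    simp only [smul_eq_mul, nsmul_eq_mul, sub_zero] at key
    linear_combination key
  have hE3 : (16 - 8*V - 9*X) * f1 = 4 - 3*V := by
    linear_combination (4 - 3*V) * hD1 + (9 * f1) * hV
  have hA : d⁄dX ℚ (16 - 8*V - 9*X : ℚ⟦X⟧) = -8*f1 - 9 := by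
    have c16 : d⁄dX ℚ (16 : ℚ⟦X⟧) = 0 := by
      rw [← map_ofNat (C (R := ℚ)) 16]; exact derivative_C (r := 16)
    have c8 : d⁄dX ℚ (8 : ℚ⟦X⟧) = 0 := by
      rw [← map_ofNat (C (R := ℚ)) 8]; exact derivative_C (r := 8)
    have c9 : d⁄dX ℚ (9 : ℚ⟦X⟧) = 0 := by
      rw [← map_ofNat (C (R := ℚ)) 9]; exact derivative_C (r := 9)
    rw [map_sub, map_sub, Derivation.leibniz, Derivation.leibniz, c16, c8, c9,
      derivative_X]
    simp only [smul_eq_mul, mul_zero, zero_add, mul_one, add_zero]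
    ring
  have hE4 : (16 - 8*V - 9*X) * f2 = 8*f1^2 + 6*f1 := by
    have key := congrArg (d⁄dX ℚ) hE3
    rw [Derivation.leibniz, hA, map_sub, Derivation.leibniz] at key
    have c4 : d⁄dX ℚ (4 : ℚ⟦X⟧) = 0 := by
      rw [← map_ofNat (C (R := ℚ)) 4]; exact derivative_C (r := 4)
    have c3 : d⁄dX ℚ (3 : ℚ⟦X⟧) = 0 := by
      rw [← map_ofNat (C (R := ℚ)) 3]; exact derivative_C (r := 3)
    rw [c4, c3] at key
    simp only [smul_eq_mul, mul_zero, zero_sub, add_zero] at key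
    linear_combination key
  have hP3 : (16 - 8*V - 9*X)^3 * ((32 - 27*X)*X*f2 + (16 - 27*X)*f1 + 3*V - 4) = 0 := by
    linear_combination
      (8192*X - 8192*X*V + 2048*X*V^2 - 16128*X^2 + 11520*X^2*V - 1728*X^2*V^2
        + 10368*X^3 - 3888*X^3*V - 2187*X^4) * hE4
      + (4096 - 4096*V + 1024*V^2 - 7424*X + 4096*X*f1 + 6912*X*V - 2048*X*V*f1
        - 1728*X*V^2 + 3888*X^2 - 5760*X^2*f1 - 1944*X^2*V + 1728*X^2*V*f1
        - 729*X^3 + 1944*X^3*f1) * hE3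
      + (2048 - 1536*V) * hV
  have hcV : constantCoeff V = 0 := by
    rw [← coeff_zero_eq_constantCoeff_apply]; exact h0
  have hPne : (16 - 8*V - 9*X : ℚ⟦X⟧) ≠ 0 := by
    intro h
    have hc := congrArg (constantCoeff) h
    simp [hcV, constantCoeff_X, map_ofNat] at hc
  have hODE : (32 - 27*X)*X*f2 + (16 - 27*X)*f1 + 3*V - 4 = 0 := by
    rcases mul_eq_zero.mp hP3 with h | h
    · exact absurd h (pow_ne_zero 3 hPne)
    · exact h
  have hODE' : C 32 * (X*f2) + C 16 * f1 + C 3 * V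
      = C 27 * (X*(X*f2)) + C 27 * (X*f1) + C 4 := by
    have c32 : (C (R := ℚ)) (32:ℚ) = (32:ℚ⟦X⟧) := map_ofNat _ 32
    have c16 : (C (R := ℚ)) (16:ℚ) = (16:ℚ⟦X⟧) := map_ofNat _ 16
    have c3 : (C (R := ℚ)) (3:ℚ) = (3:ℚ⟦X⟧) := map_ofNat _ 3
    have c27 : (C (R := ℚ)) (27:ℚ) = (27:ℚ⟦X⟧) := map_ofNat _ 27
    have c4 : (C (R := ℚ)) (4:ℚ) = (4:ℚ⟦X⟧) := map_ofNat _ 4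
    rw [c32, c16, c3, c27, c4]
    linear_combination hODE
  have hXf2 : ∀ k : ℕ, coeff k (X*f2) = (k:ℚ)*((k:ℚ)+1)*coeff (k+1) V := by
    intro k
    cases k with
    | zero =>
        rw [coeff_zero_eq_constantCoeff_apply, map_mul, constantCoeff_X, zero_mul]
        push_cast; ring
    | succ j =>
        rw [coeff_succ_X_mul, hf2, coeff_derivative, hf1, coeff_derivative]
        push_cast; ring
  -- base case : coefficient 1
  have h1 : coeff 1 V = 1/4 := by
    have hk := congrArg (coeff 0) hODE'
    have hz : coeff 0 (X*(X*f2)) = 0 := by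
      rw [coeff_zero_eq_constantCoeff_apply, map_mul, constantCoeff_X, zero_mul]
    have hz1 : coeff 0 (X*f1) = 0 := by
      rw [coeff_zero_eq_constantCoeff_apply, map_mul, constantCoeff_X, zero_mul]
    simp only [map_add, coeff_C_mul, hXf2 0, hz, hz1, h0, coeff_C] at hk
    rw [hf1, coeff_derivative] at hk
    norm_num at hk
    linarith
  -- two-term recursion
  have hrec : ∀ k : ℕ, (16*((k:ℚ)+2)*(2*(k:ℚ)+3)) * coeff (k+2) V
      = (3*(3*(k:ℚ)+2)*(3*(k:ℚ)+4)) * coeff (k+1) V := by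
    intro k
    have hk := congrArg (coeff (k+1)) hODE'
    simp only [map_add, coeff_C_mul, coeff_succ_X_mul] at hk
    rw [hXf2 k] at hk
    rw [hf2, coeff_derivative, hf1, coeff_derivative, coeff_derivative] at hk
    rw [coeff_C, if_neg (Nat.succ_ne_zero k)] at hk
    push_cast at hk
    linear_combination hk
  -- closed form, division-free
  have key : ∀ m : ℕ, (2:ℚ)^(3*m+2) * ((m:ℚ)+1) * coeff (m+1) V
      = ((3*m+1).choose m : ℚ) := by
    intro m
    induction m with
    | zero => simp [h1]; norm_num
    | succ j ih =>
        have hr := hrec j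
        have hch := choose_id_q j
        have hcancel : (((j:ℚ)+1)*(16*((j:ℚ)+2)*(2*(j:ℚ)+3))) ≠ 0 := by positivity
        apply mul_left_cancel₀ hcancel
        push_cast
        push_cast at ih hr hch
        rw [show 3*(j+1)+2 = 3*j+5 by ring, show (3*(j+1)+1 : ℕ) = 3*j+4 by ring,
          show ((j:ℕ)+1+1) = j+2 by ring]
        linear_combination (((j:ℚ)+1)*((j:ℚ)+2)*2^(3*j+5)) * hr
          + (24*(3*(j:ℚ)+2)*(3*(j:ℚ)+4)*((j:ℚ)+2)) * ih
          + (-8*((j:ℚ)+2)) * hch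
  intro n hn
  obtain ⟨m, rfl⟩ : ∃ m, n = m + 1 := ⟨n - 1, by omega⟩
  rw [show 3*(m+1) - 2 = 3*m+1 by omega, show (m+1) - 1 = m by omega,
    show 3*(m+1) - 1 = 3*m+2 by omega]
  have hk := key m
  have hp : ((2:ℚ))^(3*m+2) ≠ 0 := by positivity
  have hm : ((m:ℚ)+1) ≠ 0 := by positivity
  push_cast
  field_simp
  linear_combination hk
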